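/- Let (p_{i,j}) be a model with small steps whose kernel K(x,y) = Σ_{(i,j)} p_{i,j} x^{1−i} y^{1−j} − xy satisfies K(0,0) = 0 (equivalently p_{1,1} = 0) and (∂K/∂x)(0,0) ≠ 0 (equivalently p_{0,1} ≠ 0). Let X ∈ ℂ[[y]] be a formal power series with X(0) = 0 and K(X(y), y) = 0. Suppose F ∈ ℂ[[x,y]] is a bivariate formal power series such that F(X(y), y) = 0 (the substitution of the pair (X(y), y) into F is well defined since X(0) = 0) and F(x,0) ≠ 0 as an element of ℂ[[x]]. Then F(x,y)/K(x,y) is a bivariate formal power series, i.e. K divides F in ℂ[[x,y]]. -/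

import Mathlib

open Finset

/-- The set of possible small steps `{-1,0,1} × {-1,0,1}` (the step `(0,0)` is excluded
via the support condition of the model). -/
def SmallStepGrid : Finset (ℤ × ℤ) := ({-1, 0, 1} : Finset ℤ) ×ˢ ({-1, 0, 1} : Finset ℤ)

/-- A model with small steps: nonnegative weights `p i j` supported on
`{-1,0,1}² \ {(0,0)}` summing to `1`. -/
structure SmallStepModel where
  p : ℤ → ℤ → ℝ
  nonneg : ∀ u v, 0 ≤ p u v
  supp : ∀ u v, p u v ≠ 0 → ((u, v) ∈ SmallStepGrid ∧ (u, v) ≠ (0, 0))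
  sum_one : ∑ uv ∈ SmallStepGrid, p uv.1 uv.2 = 1

/-- Zero drift: both coordinates of the mean step vanish. -/
def SmallStepModel.ZeroDrift (M : SmallStepModel) : Prop :=
  (∑ uv ∈ SmallStepGrid, (uv.1 : ℝ) * M.p uv.1 uv.2 = 0) ∧
  (∑ uv ∈ SmallStepGrid, (uv.2 : ℝ) * M.p uv.1 uv.2 = 0)

/-- The cyclic list of the eight boundary weights. -/
def SmallStepModel.cyc (M : SmallStepModel) : Fin 8 → ℝ :=
  ![M.p 1 1, M.p 1 0, M.p 1 (-1), M.p 0 (-1), M.p (-1) (-1), M.p (-1) 0, M.p (-1) 1,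
    M.p 0 1]

/-- Non-degeneracy: the cyclic list of the eight weights contains no
three consecutive zeros. -/
def SmallStepModel.NonDegenerate (M : SmallStepModel) : Prop :=
  ∀ k : Fin 8, ¬(M.cyc k = 0 ∧ M.cyc (k + 1) = 0 ∧ M.cyc (k + 2) = 0)


/-- The kernel `K(x,y) = Σ_{(i,j)} p_{i,j} x^{1−i} y^{1−j} − xy` of the model, viewed as an
element of `ℂ[[x,y]]`. -/
noncomputable def kernelPS (M : SmallStepModel) : MvPowerSeries (Fin 2) ℂ :=
  (∑ uv ∈ SmallStepGrid, MvPowerSeries.C (σ := Fin 2) (R := ℂ) ((M.p uv.1 uv.2 : ℝ) : ℂ) *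
      MvPowerSeries.X 0 ^ (1 - uv.1).toNat * MvPowerSeries.X 1 ^ (1 - uv.2).toNat)
    - MvPowerSeries.X 0 * MvPowerSeries.X 1

/-- Formal substitution `F(X(y), y)` of a pair `(X(y), y)` into a bivariate power series
`F ∈ ℂ[[x,y]]`; this is the correct substitution whenever `X` has zero constant term,
since then the coefficient of `yⁿ` only receives contributions from monomials `x^a y^b`
with `a, b ≤ n`. -/
noncomputable def substXY (Xs : PowerSeries ℂ) (F : MvPowerSeries (Fin 2) ℂ) :
    PowerSeries ℂ :=
  PowerSeries.mk fun n => ∑ a ∈ Finset.range (n + 1), ∑ b ∈ Finset.range (n + 1),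
    MvPowerSeries.coeff (R := ℂ) (Finsupp.single 0 a + Finsupp.single 1 b) F *
      PowerSeries.coeff (R := ℂ) (n - b) (Xs ^ a)

namespace KD
noncomputable section

def e (a b : ℕ) : Fin 2 →₀ ℕ := Finsupp.single 0 a + Finsupp.single 1 b

lemma e_apply0 (a b : ℕ) : e a b 0 = a := by simp [e]
lemma e_apply1 (a b : ℕ) : e a b 1 = b := by simp [e]
lemma e_eq (m : Fin 2 →₀ ℕ) : e (m 0) (m 1) = m := by
  ext i; fin_cases i <;> simp [e]
lemma e_add (a b c d : ℕ) : e a b + e c d = e (a+c) (b+d) := by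
  ext i; fin_cases i <;> simp [e]

def cf (a b : ℕ) (f : MvPowerSeries (Fin 2) ℂ) : ℂ := MvPowerSeries.coeff (R := ℂ) (e a b) f

lemma coeff_eq_cf (m : Fin 2 →₀ ℕ) (f : MvPowerSeries (Fin 2) ℂ) :
    MvPowerSeries.coeff (R := ℂ) m f = cf (m 0) (m 1) f := by rw [cf, e_eq]

lemma cf_mul (a b : ℕ) (f g : MvPowerSeries (Fin 2) ℂ) :
    cf a b (f * g) = ∑ p ∈ antidiagonal a, ∑ q ∈ antidiagonal b,
      cf p.1 q.1 f * cf p.2 q.2 g := by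
  rw [cf, MvPowerSeries.coeff_mul]
  rw [← Finset.sum_product']
  apply Finset.sum_nbij' (i := fun P => ((P.1 0, P.2 0), (P.1 1, P.2 1)))
    (j := fun pq => (e pq.1.1 pq.2.1, e pq.1.2 pq.2.2))
  · intro P hP
    rw [Finset.HasAntidiagonal.mem_antidiagonal] at hP
    simp only [Finset.mem_product, Finset.HasAntidiagonal.mem_antidiagonal]
    constructor
    · simpa [e_apply0] using congrArg (fun m => m 0) hP
    · simpa [e_apply1] using congrArg (fun m => m 1) hP
  · intro pq hpq
    simp only [Finset.mem_product, Finset.HasAntidiagonal.mem_antidiagonal] at hpq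
    rw [Finset.HasAntidiagonal.mem_antidiagonal, e_add, hpq.1, hpq.2]
  · intro P hP
    rw [Finset.HasAntidiagonal.mem_antidiagonal] at hP
    exact Prod.ext (e_eq _) (e_eq _)
  · intro pq hpq
    simp [e_apply0, e_apply1]
  · intro P hP
    simp only [cf, e_eq]


section Subst
variable (Xs : PowerSeries ℂ) (hX0 : PowerSeries.constantCoeff (R := ℂ) Xs = 0)

def w (n a b : ℕ) : ℂ := PowerSeries.coeff (R := ℂ) n (Xs ^ a * PowerSeries.X ^ b)

lemma w_zero (hX0 : PowerSeries.constantCoeff (R := ℂ) Xs = 0) {n a b : ℕ} (h : n < a + b) :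
    w Xs n a b = 0 := by
  have hdvd : (PowerSeries.X : PowerSeries ℂ) ^ (a + b) ∣ Xs ^ a * PowerSeries.X ^ b := by
    rw [pow_add]
    exact mul_dvd_mul (pow_dvd_pow_of_dvd (PowerSeries.X_dvd_iff.mpr hX0) a) dvd_rfl
  exact PowerSeries.X_pow_dvd_iff.mp hdvd n h

lemma w_eval {n b : ℕ} (a : ℕ) (h : b ≤ n) : w Xs n a b = PowerSeries.coeff (R := ℂ) (n - b) (Xs ^ a) := by
  rw [w, PowerSeries.coeff_mul_X_pow', if_pos h]

lemma coeff_substXY (hX0 : PowerSeries.constantCoeff (R := ℂ) Xs = 0)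
    (f : MvPowerSeries (Fin 2) ℂ) {n N : ℕ} (h : n ≤ N) :
    PowerSeries.coeff (R := ℂ) n (substXY Xs f) =
      ∑ p ∈ range (N+1) ×ˢ range (N+1), cf p.1 p.2 f * w Xs n p.1 p.2 := by
  rw [substXY, PowerSeries.coeff_mk, ← Finset.sum_product']
  have step1 : ∑ p ∈ range (n+1) ×ˢ range (n+1),
      MvPowerSeries.coeff (R := ℂ) (Finsupp.single 0 p.1 + Finsupp.single 1 p.2) f *
        PowerSeries.coeff (R := ℂ) (n - p.2) (Xs ^ p.1)
      = ∑ p ∈ range (n+1) ×ˢ range (n+1), cf p.1 p.2 f * w Xs n p.1 p.2 := by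
    refine Finset.sum_congr rfl fun p hp => ?_
    rw [Finset.mem_product, Finset.mem_range, Finset.mem_range] at hp
    rw [w_eval Xs p.1 (Nat.lt_succ_iff.mp hp.2)]
    rfl
  rw [step1]
  refine Finset.sum_subset
    (Finset.product_subset_product (range_subset_range.mpr (by omega)) (range_subset_range.mpr (by omega)))
    fun p hpN hpn => ?_
  rw [Finset.mem_product, Finset.mem_range, Finset.mem_range] at hpn
  have : n < p.1 + p.2 := by
    rcases not_and_or.mp hpn with h1 | h1 <;> omega
  rw [w_zero Xs hX0 this, mul_zero]
end Subst

section Subst2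
variable (Xs : PowerSeries ℂ)

lemma substXY_add (f g : MvPowerSeries (Fin 2) ℂ) :
    substXY Xs (f + g) = substXY Xs f + substXY Xs g := by
  ext n
  simp [substXY, map_add, add_mul, Finset.sum_add_distrib]

lemma substXY_mul (hX0 : PowerSeries.constantCoeff (R := ℂ) Xs = 0) (f g : MvPowerSeries (Fin 2) ℂ) :
    substXY Xs (f * g) = substXY Xs f * substXY Xs g := by
  ext n
  have box_mem : ∀ {p : ℕ × ℕ}, p ∈ range (n+1) ×ˢ range (n+1) → p.1 ≤ n ∧ p.2 ≤ n := by
    intro p hp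
    rw [Finset.mem_product, Finset.mem_range, Finset.mem_range] at hp
    omega
  calc PowerSeries.coeff (R := ℂ) n (substXY Xs (f * g))
      = ∑ ab ∈ range (n+1) ×ˢ range (n+1), cf ab.1 ab.2 (f*g) * w Xs n ab.1 ab.2 :=
        coeff_substXY Xs hX0 (f*g) le_rfl
    _ = ∑ ab ∈ range (n+1) ×ˢ range (n+1), ∑ p ∈ antidiagonal ab.1, ∑ q ∈ antidiagonal ab.2,
          cf p.1 q.1 f * cf p.2 q.2 g * w Xs n ab.1 ab.2 := by
        refine Finset.sum_congr rfl fun ab _ => ?_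
        rw [cf_mul, Finset.sum_mul]
        exact Finset.sum_congr rfl fun p _ => by rw [Finset.sum_mul]
    _ = ∑ ab ∈ range (n+1) ×ˢ range (n+1), ∑ r ∈ antidiagonal ab.1 ×ˢ antidiagonal ab.2,
          cf r.1.1 r.2.1 f * cf r.1.2 r.2.2 g * w Xs n ab.1 ab.2 := by
        exact Finset.sum_congr rfl fun ab _ => (Finset.sum_product' _ _ _).symm
    _ = ∑ x ∈ (range (n+1) ×ˢ range (n+1)).sigma
          (fun ab => antidiagonal ab.1 ×ˢ antidiagonal ab.2),
          cf x.2.1.1 x.2.2.1 f * cf x.2.1.2 x.2.2.2 g * w Xs n x.1.1 x.1.2 :=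
        Finset.sum_sigma' _ _ _
    _ = ∑ pq ∈ (range (n+1) ×ˢ range (n+1)) ×ˢ (range (n+1) ×ˢ range (n+1)) with
          (pq.1.1 + pq.2.1 ≤ n ∧ pq.1.2 + pq.2.2 ≤ n),
          cf pq.1.1 pq.1.2 f * cf pq.2.1 pq.2.2 g *
            w Xs n (pq.1.1 + pq.2.1) (pq.1.2 + pq.2.2) := by
        apply Finset.sum_nbij'
          (i := fun x => ((x.2.1.1, x.2.2.1), (x.2.1.2, x.2.2.2)))
          (j := fun pq => ⟨(pq.1.1 + pq.2.1, pq.1.2 + pq.2.2), ((pq.1.1, pq.2.1), (pq.1.2, pq.2.2))⟩)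
        · intro x hx
          simp only [Finset.mem_sigma, Finset.mem_product, Finset.HasAntidiagonal.mem_antidiagonal,
            Finset.mem_range] at hx
          simp only [Finset.mem_filter, Finset.mem_product, Finset.mem_range]
          omega
        · intro pq hpq
          simp only [Finset.mem_filter, Finset.mem_product, Finset.mem_range] at hpq
          simp only [Finset.mem_sigma, Finset.mem_product, Finset.HasAntidiagonal.mem_antidiagonal,
            Finset.mem_range]
          exact ⟨⟨by omega, by omega⟩, trivial, trivial⟩
        · intro x hx
          simp only [Finset.mem_sigma, Finset.mem_product, Finset.HasAntidiagonal.mem_antidiagonal,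
            Finset.mem_range] at hx
          obtain ⟨hab, h1, h2⟩ := hx
          rcases x with ⟨⟨a, b⟩, ⟨⟨i, u⟩, ⟨j, v⟩⟩⟩
          simp only at h1 h2 ⊢
          subst h1 h2
          rfl
        · intro pq _
          rfl
        · intro x hx
          simp only [Finset.mem_sigma, Finset.mem_product, Finset.HasAntidiagonal.mem_antidiagonal,
            Finset.mem_range] at hx
          obtain ⟨hab, h1, h2⟩ := hx
          rw [h1, h2]
    _ = ∑ pq ∈ (range (n+1) ×ˢ range (n+1)) ×ˢ (range (n+1) ×ˢ range (n+1)),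
          cf pq.1.1 pq.1.2 f * cf pq.2.1 pq.2.2 g *
            w Xs n (pq.1.1 + pq.2.1) (pq.1.2 + pq.2.2) := by
        refine Finset.sum_subset (Finset.filter_subset _ _) fun pq hpq hpq' => ?_
        rw [Finset.mem_filter] at hpq'
        have : n < (pq.1.1 + pq.2.1) + (pq.1.2 + pq.2.2) := by
          have := (not_and_or.mp fun hc => hpq' ⟨hpq, hc⟩)
          omega
        rw [w_zero Xs hX0 this, mul_zero]
    _ = PowerSeries.coeff (R := ℂ) n (substXY Xs f * substXY Xs g) := by
        rw [PowerSeries.coeff_mul]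
        calc ∑ pq ∈ (range (n+1) ×ˢ range (n+1)) ×ˢ (range (n+1) ×ˢ range (n+1)),
              cf pq.1.1 pq.1.2 f * cf pq.2.1 pq.2.2 g *
                w Xs n (pq.1.1 + pq.2.1) (pq.1.2 + pq.2.2)
            = ∑ pq ∈ (range (n+1) ×ˢ range (n+1)) ×ˢ (range (n+1) ×ˢ range (n+1)),
              ∑ kl ∈ antidiagonal n,
                (cf pq.1.1 pq.1.2 f * w Xs kl.1 pq.1.1 pq.1.2) *
                  (cf pq.2.1 pq.2.2 g * w Xs kl.2 pq.2.1 pq.2.2) := by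
              refine Finset.sum_congr rfl fun pq _ => ?_
              have hW : w Xs n (pq.1.1 + pq.2.1) (pq.1.2 + pq.2.2)
                  = ∑ kl ∈ antidiagonal n,
                      w Xs kl.1 pq.1.1 pq.1.2 * w Xs kl.2 pq.2.1 pq.2.2 := by
                rw [w, show Xs ^ (pq.1.1 + pq.2.1) * PowerSeries.X ^ (pq.1.2 + pq.2.2)
                    = (Xs ^ pq.1.1 * PowerSeries.X ^ pq.1.2) *
                        (Xs ^ pq.2.1 * PowerSeries.X ^ pq.2.2) by
                  rw [pow_add, pow_add]; ring]
                rw [PowerSeries.coeff_mul]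
                rfl
              rw [hW, Finset.mul_sum]
              exact Finset.sum_congr rfl fun kl _ => by ring
            _ = ∑ kl ∈ antidiagonal n,
                ∑ pq ∈ (range (n+1) ×ˢ range (n+1)) ×ˢ (range (n+1) ×ˢ range (n+1)),
                (cf pq.1.1 pq.1.2 f * w Xs kl.1 pq.1.1 pq.1.2) *
                  (cf pq.2.1 pq.2.2 g * w Xs kl.2 pq.2.1 pq.2.2) := Finset.sum_comm
            _ = ∑ kl ∈ antidiagonal n,
                PowerSeries.coeff (R := ℂ) kl.1 (substXY Xs f) * PowerSeries.coeff (R := ℂ) kl.2 (substXY Xs g) := by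
              refine Finset.sum_congr rfl fun kl hkl => ?_
              rw [Finset.HasAntidiagonal.mem_antidiagonal] at hkl
              rw [coeff_substXY Xs hX0 f (show kl.1 ≤ n by omega),
                coeff_substXY Xs hX0 g (show kl.2 ≤ n by omega),
                Finset.sum_mul_sum, ← Finset.sum_product']
end Subst2

section Division

def dset (a b : ℕ) : Finset (ℕ × ℕ) :=
  ((range (a+2) ×ˢ range (b+1)).erase (0,0)).erase (1,0)

lemma mem_dset {a b : ℕ} {ij : ℕ × ℕ} (h : ij ∈ dset a b) :
    2 ≤ ij.1 + 3 * ij.2 ∧ ij.1 ≤ a + 1 ∧ ij.2 ≤ b := by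
  simp only [dset, Finset.mem_erase, Finset.mem_product, Finset.mem_range, ne_eq,
    Prod.ext_iff] at h
  omega

noncomputable def qaux (K F : ℕ → ℕ → ℂ) : ℕ → ℕ → ℕ → ℂ
  | 0, _, _ => 0
  | (fuel+1), a, b =>
    (F (a+1) b - ∑ ij ∈ dset a b, K ij.1 ij.2 * qaux K F fuel (a+1-ij.1) (b-ij.2)) / K 1 0

lemma qaux_indep (K F : ℕ → ℕ → ℂ) : ∀ (n a b fuel fuel' : ℕ), a + 3*b ≤ n →
    a + 3*b < fuel → a + 3*b < fuel' → qaux K F fuel a b = qaux K F fuel' a b := by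
  intro n
  induction n using Nat.strong_induction_on with
  | _ n IH =>
    intro a b fuel fuel' hn hf hf'
    match fuel, fuel' with
    | fuel+1, fuel'+1 =>
      simp only [qaux]
      congr 2
      refine Finset.sum_congr rfl fun ij hij => ?_
      obtain ⟨h2, hi, hj⟩ := mem_dset hij
      have hm : (a+1-ij.1) + 3*(b-ij.2) ≤ a + 3*b - 1 := by omega
      have hpos : 1 ≤ a + 3*b := by omega
      rw [IH (a + 3*b - 1) (by omega) _ _ fuel fuel' (by omega) (by omega) (by omega)]

noncomputable def qf (K F : ℕ → ℕ → ℂ) (a b : ℕ) : ℂ := qaux K F (a + 3*b + 1) a b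

lemma qf_rec (K F : ℕ → ℕ → ℂ) (hc : K 1 0 ≠ 0) (a b : ℕ) :
    K 1 0 * qf K F a b =
      F (a+1) b - ∑ ij ∈ dset a b, K ij.1 ij.2 * qf K F (a+1-ij.1) (b-ij.2) := by
  rw [qf]
  show K 1 0 * qaux K F (a + 3*b + 1) a b = _
  rw [qaux, mul_div_cancel₀ _ hc]
  congr 1
  refine Finset.sum_congr rfl fun ij hij => ?_
  obtain ⟨h2, hi, hj⟩ := mem_dset hij
  simp only [qf]
  congr 1
  exact qaux_indep K F (a+3*b) (a+1-ij.1) (b-ij.2) (a+3*b) ((a+1-ij.1)+3*(b-ij.2)+1)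
    (by omega) (by omega) (by omega)

theorem division (K : MvPowerSeries (Fin 2) ℂ) (h00 : cf 0 0 K = 0) (h10 : cf 1 0 K ≠ 0)
    (F : MvPowerSeries (Fin 2) ℂ) :
    ∃ Q R : MvPowerSeries (Fin 2) ℂ, F = K * Q + R ∧ ∀ a b : ℕ, cf (a+1) b R = 0 := by
  set k : ℕ → ℕ → ℂ := fun i j => cf i j K with hk
  set ff : ℕ → ℕ → ℂ := fun a b => cf a b F with hff
  set Q : MvPowerSeries (Fin 2) ℂ := fun m => qf k ff (m 0) (m 1) with hQ
  have hcfQ : ∀ a b : ℕ, cf a b Q = qf k ff a b := by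
    intro a b
    rw [cf, MvPowerSeries.coeff_apply, hQ]
    simp only [e_apply0, e_apply1]
  have key : ∀ a b : ℕ, cf (a+1) b (K * Q) = ff (a+1) b := by
    intro a b
    rw [cf_mul]
    rw [Finset.Nat.sum_antidiagonal_eq_sum_range_succ_mk]
    have : ∀ p ∈ range (a+2), ∑ q ∈ antidiagonal b, cf (p, a+1-p).1 q.1 K * cf (p, a+1-p).2 q.2 Q
        = ∑ j ∈ range (b+1), k p j * qf k ff (a+1-p) (b-j) := by
      intro p _
      rw [Finset.Nat.sum_antidiagonal_eq_sum_range_succ_mk]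
      exact Finset.sum_congr rfl fun j _ => by rw [hcfQ]
    rw [Finset.sum_congr rfl this, ← Finset.sum_product']
    have h00mem : ((0,0) : ℕ × ℕ) ∈ range (a+2) ×ˢ range (b+1) := by
      simp [Finset.mem_product]
    have h10mem : ((1,0) : ℕ × ℕ) ∈ (range (a+2) ×ˢ range (b+1)).erase (0,0) := by
      simp [Finset.mem_erase, Finset.mem_product]
    rw [← Finset.add_sum_erase _ _ h00mem]
    rw [← Finset.add_sum_erase _ _ h10mem]
    show k 0 0 * qf k ff (a+1-0) (b-0) + (k 1 0 * qf k ff (a+1-1) (b-0) +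
      ∑ ij ∈ dset a b, k ij.1 ij.2 * qf k ff (a+1-ij.1) (b-ij.2)) = ff (a+1) b
    have hk00 : k 0 0 = 0 := h00
    rw [hk00, zero_mul, zero_add]
    have := qf_rec k ff h10 a b
    simp only [Nat.add_sub_cancel, Nat.sub_zero] at this ⊢
    rw [this]
    ring
  refine ⟨Q, F - K * Q, by ring, fun a b => ?_⟩
  have : cf (a+1) b (F - K * Q) = cf (a+1) b F - cf (a+1) b (K * Q) := by
    rw [cf, cf, cf, map_sub]
  rw [this, key a b]
  simp [hff]

end Division

section Assembly

lemma cf_C_mul_X_pow (r : ℂ) (a b s t : ℕ) :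
    cf a b (MvPowerSeries.C (σ := Fin 2) (R := ℂ) r * MvPowerSeries.X 0 ^ s * MvPowerSeries.X 1 ^ t)
      = if a = s ∧ b = t then r else 0 := by
  rw [MvPowerSeries.X_pow_eq, MvPowerSeries.X_pow_eq, ← MvPowerSeries.monomial_zero_eq_C_apply,
    MvPowerSeries.monomial_mul_monomial, MvPowerSeries.monomial_mul_monomial]
  rw [cf, MvPowerSeries.coeff_monomial]
  have hest : (0 : Fin 2 →₀ ℕ) + Finsupp.single 0 s + Finsupp.single 1 t = e s t := by
    rw [zero_add]; rfl
  rw [hest]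
  have heq : e a b = e s t ↔ a = s ∧ b = t := by
    constructor
    · intro h
      exact ⟨by rw [← e_apply0 a b, h, e_apply0 s t], by rw [← e_apply1 a b, h, e_apply1 s t]⟩
    · rintro ⟨rfl, rfl⟩; rfl
  by_cases h : a = s ∧ b = t
  · rw [if_pos (heq.mpr h), if_pos h, mul_one, mul_one]
  · rw [if_neg (fun hc => h (heq.mp hc)), if_neg h]

lemma cf_X0_mul_X1 (a b : ℕ) :
    cf a b (MvPowerSeries.X (R := ℂ) 0 * MvPowerSeries.X 1) = if a = 1 ∧ b = 1 then 1 else 0 := by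
  have : (MvPowerSeries.X (R := ℂ) (0 : Fin 2) * MvPowerSeries.X 1)
      = MvPowerSeries.C (σ := Fin 2) (R := ℂ) 1 * MvPowerSeries.X 0 ^ 1 * MvPowerSeries.X 1 ^ 1 := by
    simp
  rw [this, cf_C_mul_X_pow]

lemma cf_kernel (M : SmallStepModel) (a b : ℕ) :
    cf a b (kernelPS M) =
      (∑ uv ∈ SmallStepGrid, if a = (1 - uv.1).toNat ∧ b = (1 - uv.2).toNat
        then ((M.p uv.1 uv.2 : ℝ) : ℂ) else 0) - (if a = 1 ∧ b = 1 then 1 else 0) := by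
  rw [kernelPS, cf, map_sub, map_sum]
  rw [← cf_X0_mul_X1, cf]
  congr 1
  exact Finset.sum_congr rfl fun uv _ => cf_C_mul_X_pow _ _ _ _ _

lemma grid_bounds {uv : ℤ × ℤ} (h : uv ∈ SmallStepGrid) :
    (-1 ≤ uv.1 ∧ uv.1 ≤ 1) ∧ (-1 ≤ uv.2 ∧ uv.2 ≤ 1) := by
  simp only [SmallStepGrid, Finset.mem_product, Finset.mem_insert, Finset.mem_singleton] at h
  omega

lemma cf00_kernel (M : SmallStepModel) (hK00 : M.p 1 1 = 0) : cf 0 0 (kernelPS M) = 0 := by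
  rw [cf_kernel, if_neg (by omega)]
  rw [Finset.sum_eq_single ((1 : ℤ), (1 : ℤ))]
  · rw [if_pos (by norm_num), hK00]; norm_num
  · intro uv hmem hne
    obtain ⟨h1, h2⟩ := grid_bounds hmem
    rw [if_neg]
    rintro ⟨hc1, hc2⟩
    apply hne
    have e1 : uv.1 = 1 := by omega
    have e2 : uv.2 = 1 := by omega
    exact Prod.ext e1 e2
  · intro h; exact absurd (by decide) h

lemma cf10_kernel (M : SmallStepModel) : cf 1 0 (kernelPS M) = ((M.p 0 1 : ℝ) : ℂ) := by
  rw [cf_kernel, if_neg (by omega)]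
  rw [Finset.sum_eq_single ((0 : ℤ), (1 : ℤ))]
  · rw [if_pos (by norm_num)]; norm_num
  · intro uv hmem hne
    obtain ⟨h1, h2⟩ := grid_bounds hmem
    rw [if_neg]
    rintro ⟨hc1, hc2⟩
    apply hne
    have e1 : uv.1 = 0 := by omega
    have e2 : uv.2 = 1 := by omega
    exact Prod.ext e1 e2
  · intro h; exact absurd (by decide) h

lemma coeff_subst_yonly (Xs : PowerSeries ℂ) (hX0 : PowerSeries.constantCoeff (R := ℂ) Xs = 0)
    (R : MvPowerSeries (Fin 2) ℂ) (hs : ∀ a b : ℕ, cf (a+1) b R = 0) (n : ℕ) :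
    PowerSeries.coeff (R := ℂ) n (substXY Xs R) = cf 0 n R := by
  rw [coeff_substXY Xs hX0 R (le_refl n)]
  rw [Finset.sum_eq_single ((0 : ℕ), n)]
  · rw [w, pow_zero, one_mul, PowerSeries.coeff_X_pow, if_pos rfl, mul_one]
  · intro p hp hne
    obtain ⟨p1, p2⟩ := p
    rcases Nat.eq_zero_or_pos p1 with h1 | h1
    · subst h1
      have hp2 : ¬ (n = p2) := fun hc => hne (by rw [hc])
      rw [w, pow_zero, one_mul, PowerSeries.coeff_X_pow, if_neg hp2, mul_zero]
    · obtain ⟨k, rfl⟩ := Nat.exists_eq_add_of_le h1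
      rw [show 1 + k = k + 1 by omega, hs k p2, zero_mul]
  · intro h
    exact absurd (by simp [Finset.mem_product]) h

theorem main (M : SmallStepModel)
    (hK00 : M.p 1 1 = 0) (hKdx : M.p 0 1 ≠ 0)
    (Xs : PowerSeries ℂ) (hX0 : PowerSeries.constantCoeff (R := ℂ) Xs = 0)
    (hKX : substXY Xs (kernelPS M) = 0)
    (F : MvPowerSeries (Fin 2) ℂ)
    (hFX : substXY Xs F = 0) :
    ∃ Q : MvPowerSeries (Fin 2) ℂ, F = kernelPS M * Q := by
  have hc10 : cf 1 0 (kernelPS M) ≠ 0 := by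
    rw [cf10_kernel]
    exact_mod_cast Complex.ofReal_ne_zero.mpr hKdx
  obtain ⟨Q, R, hdiv, hs⟩ := division (kernelPS M) (cf00_kernel M hK00) hc10 F
  have hRsub : substXY Xs R = 0 := by
    have h0 := hFX
    rw [hdiv, substXY_add, substXY_mul Xs hX0, hKX, zero_mul, zero_add] at h0
    exact h0
  have hR : R = 0 := by
    ext m
    have hz : MvPowerSeries.coeff (R := ℂ) m (0 : MvPowerSeries (Fin 2) ℂ) = 0 := map_zero _
    cases h0 : m 0 with
    | zero =>
      rw [coeff_eq_cf, h0, hz, ← coeff_subst_yonly Xs hX0 R hs (m 1), hRsub, map_zero]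
    | succ k =>
      rw [coeff_eq_cf, h0, hz]
      exact hs k (m 1)
  exact ⟨Q, by rw [hdiv, hR, add_zero]⟩

end Assembly

end
end KD

/-- Weierstrass-type division: if `K(0,0) = 0` (i.e. `p_{1,1} = 0`),
`(∂K/∂x)(0,0) ≠ 0` (i.e. `p_{0,1} ≠ 0`), `X ∈ ℂ[[y]]` satisfies `X(0) = 0` and
`K(X(y), y) = 0`, and `F ∈ ℂ[[x,y]]` satisfies `F(X(y), y) = 0` and `F(x,0) ≠ 0`, then
`K` divides `F` in `ℂ[[x,y]]`. -/
theorem kernel_divides_of_vanishing_on_branch (M : SmallStepModel)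
    (hK00 : M.p 1 1 = 0) (hKdx : M.p 0 1 ≠ 0)
    (Xs : PowerSeries ℂ) (hX0 : PowerSeries.constantCoeff (R := ℂ) Xs = 0)
    (hKX : substXY Xs (kernelPS M) = 0)
    (F : MvPowerSeries (Fin 2) ℂ)
    (hFX : substXY Xs F = 0)
    (hFx0 : ∃ n : ℕ, MvPowerSeries.coeff (R := ℂ) (Finsupp.single 0 n) F ≠ 0) :
    ∃ Q : MvPowerSeries (Fin 2) ℂ, F = kernelPS M * Q :=
  KD.main M hK00 hKdx Xs hX0 hKX F hFX
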